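/- Let α ≥ 1 and define g(z) = α(3α−1)z − (α−1)² sin_α(z) cos_α(z) for z ∈ [0, π_α]. Then g'(z) = (α+1)(α² − (α−1)² cos_α(z)²) > 0, so g is strictly increasing and g(z) > 0 for z ∈ (0, π_α]. -/

import Mathlib

open Set

/-- for `g(z) = α(3α−1)z − (α−1)² sin_α(z) cos_α(z)` on `[0, π_α]`, one has
`g'(z) = (α+1)(α² − (α−1)² cos_α(z)²) > 0`, so `g` is strictly increasing and positive on
`(0, π_α]`. -/
theorem stmt_14 (α : ℝ) (hα : 1 ≤ α) (πα : ℝ) (hπα : 0 < πα) (s c : ℝ → ℝ)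
    (hs : ∀ z ∈ Icc 0 πα, HasDerivWithinAt s (c z) (Icc 0 πα) z)
    (hc : ∀ z ∈ Icc 0 πα,
      HasDerivWithinAt c (-α * s z ^ (2 * α - 1)) (Icc 0 πα) z)
    (hs0 : s 0 = 0)
    (hsnonneg : ∀ z ∈ Icc 0 πα, 0 ≤ s z)
    (hpyth : ∀ z ∈ Icc 0 πα, (s z ^ 2) ^ α + c z ^ 2 = 1) :
    (∀ z ∈ Icc 0 πα,
      HasDerivWithinAt (fun z => α * (3 * α - 1) * z - (α - 1) ^ 2 * s z * c z)
        ((α + 1) * (α ^ 2 - (α - 1) ^ 2 * c z ^ 2)) (Icc 0 πα) z ∧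
      0 < (α + 1) * (α ^ 2 - (α - 1) ^ 2 * c z ^ 2)) ∧
    StrictMonoOn (fun z => α * (3 * α - 1) * z - (α - 1) ^ 2 * s z * c z) (Icc 0 πα) ∧
    (∀ z ∈ Ioc 0 πα, 0 < α * (3 * α - 1) * z - (α - 1) ^ 2 * s z * c z) := by
  have key : ∀ z ∈ Icc 0 πα, s z * s z ^ (2 * α - 1) = 1 - c z ^ 2 := by
    intro z hz
    have h1 : s z * s z ^ (2 * α - 1) = (s z ^ 2) ^ α := by
      rcases eq_or_lt_of_le (hsnonneg z hz) with h | h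
      · rw [← h, Real.zero_rpow (by nlinarith), mul_zero,
          show ((0:ℝ) ^ 2) = 0 by ring, Real.zero_rpow (by positivity)]
      · rw [show (s z ^ 2 : ℝ) = s z ^ ((2:ℕ):ℝ) by rw [Real.rpow_natCast],
          ← Real.rpow_mul h.le]
        nth_rewrite 1 [show s z = s z ^ (1:ℝ) by rw [Real.rpow_one]]
        rw [← Real.rpow_add h]
        norm_num
    have := hpyth z hz
    linarith [h1]
  have hc2 : ∀ z ∈ Icc 0 πα, c z ^ 2 ≤ 1 := by
    intro z hz
    have := hpyth z hz
    have h2 : (0:ℝ) ≤ (s z ^ 2) ^ α := Real.rpow_nonneg (sq_nonneg _) α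
    linarith
  have hd : ∀ z ∈ Icc 0 πα,
      HasDerivWithinAt (fun z => α * (3 * α - 1) * z - (α - 1) ^ 2 * s z * c z)
        ((α + 1) * (α ^ 2 - (α - 1) ^ 2 * c z ^ 2)) (Icc 0 πα) z := by
    intro z hz
    have h := ((hasDerivWithinAt_id z (Icc 0 πα)).const_mul (α * (3 * α - 1))).sub
      (((hs z hz).mul (hc z hz)).const_mul ((α - 1) ^ 2))
    refine (h.congr_deriv ?_).congr_of_mem (fun x _ => ?_) hz
    · have hk := key z hz
      have h2 : s z * (-α * s z ^ (2 * α - 1)) = -α * (1 - c z ^ 2) := by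
        rw [← hk]; ring
      rw [h2]; ring
    · simp only [id, Pi.sub_apply, Pi.mul_apply]; ring
  have hpos : ∀ z ∈ Icc 0 πα, 0 < (α + 1) * (α ^ 2 - (α - 1) ^ 2 * c z ^ 2) := by
    intro z hz
    have h1 := hc2 z hz
    nlinarith [mul_le_mul_of_nonneg_left h1 (sq_nonneg (α - 1))]
  have hmono : StrictMonoOn (fun z => α * (3 * α - 1) * z - (α - 1) ^ 2 * s z * c z)
      (Icc 0 πα) := by
    apply strictMonoOn_of_deriv_pos (convex_Icc 0 πα)
    · exact fun z hz => (hd z hz).continuousWithinAt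
    · intro x hx
      rw [interior_Icc] at hx
      have hx' : x ∈ Icc 0 πα := Ioo_subset_Icc_self hx
      have := ((hd x hx').hasDerivAt (Icc_mem_nhds hx.1 hx.2)).deriv
      rw [this]
      exact hpos x hx'
  refine ⟨fun z hz => ⟨hd z hz, hpos z hz⟩, hmono, ?_⟩
  intro z hz
  have h0 : (0:ℝ) ∈ Icc 0 πα := ⟨le_refl 0, hπα.le⟩
  have := hmono h0 ⟨hz.1.le, hz.2⟩ hz.1
  simpa [hs0] using this
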